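/- Let M be a real r × n matrix of rank r with columns m₁, …, mₙ, none of which is the zero vector, let h and k be positive integers with h ≤ r, and set d = r − h. Define the distance space (X, ρ) with X = {p₀, …, p_k} ∪ {x₁, …, xₙ} (all k + 1 + n points distinct) by: ρ(pᵢ, pⱼ) = 0 for all i, j ∈ {0,…,k}; ρ(pᵢ, xⱼ) = ‖mⱼ‖₂ for all i ∈ {0,…,k} and j ∈ {1,…,n}; and ρ(xᵢ, xⱼ) = ‖mᵢ − mⱼ‖₂ for all distinct i, j ∈ {1,…,n}. Then there exists a set C of at most k column indices such that the matrix M' obtained from M by deleting the columns in C satisfies rank(M') ≤ r − h if and only if there exists a set O ⊆ X with |O| ≤ k such that (X \ O, ρ) is d-embeddable. -/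

import Mathlib

/-- `(X, ρ)` is a distance space: `ρ` is symmetric, nonnegative and vanishes on the
diagonal on the points of `X`. -/
def IsDistance {α : Type*} (X : Finset α) (ρ : α → α → ℝ) : Prop :=
  (∀ x ∈ X, ∀ y ∈ X, ρ x y = ρ y x) ∧ (∀ x ∈ X, ∀ y ∈ X, 0 ≤ ρ x y) ∧ (∀ x ∈ X, ρ x x = 0)

/-- `(X, ρ)` is isometrically embeddable into `ℝ^d`. -/
def IsEmbeddable {α : Type*} (X : Finset α) (ρ : α → α → ℝ) (d : ℕ) : Prop :=
  ∃ φ : α → EuclideanSpace ℝ (Fin d), ∀ x ∈ X, ∀ y ∈ X, ρ x y = dist (φ x) (φ y)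

/-- `(X, ρ)` is strongly `d`-embeddable: `d`-embeddable but (for `d ≥ 1`)
not `(d-1)`-embeddable. -/
def IsStronglyEmbeddable {α : Type*} (X : Finset α) (ρ : α → α → ℝ) (d : ℕ) : Prop :=
  IsEmbeddable X ρ d ∧ (0 < d → ¬ IsEmbeddable X ρ (d - 1))

/-- A nonempty set `Y` with `|Y| = r + 1` is independent if `(Y, ρ)` is strongly
`r`-embeddable. -/
def IsIndependent {α : Type*} (Y : Finset α) (ρ : α → α → ℝ) : Prop :=
  Y.Nonempty ∧ IsStronglyEmbeddable Y ρ (Y.card - 1)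

/-- The `j`-th column of `M`, viewed as a point of Euclidean space `ℝ^r`. -/
noncomputable def col {r n : ℕ} (M : Matrix (Fin r) (Fin n) ℝ) (j : Fin n) : EuclideanSpace ℝ (Fin r) :=
  (WithLp.equiv 2 (Fin r → ℝ)).symm (fun i => M i j)

/-- The distance space of the rank-reduction reduction: points `p₀, …, p_k` (modelled
as `Sum.inl a`) and `x₁, …, xₙ` (modelled as `Sum.inr j`, corresponding to the column
`mⱼ` of `M`). -/
noncomputable def rhoRank {r n : ℕ} (M : Matrix (Fin r) (Fin n) ℝ) (k : ℕ) :
    (Fin (k + 1) ⊕ Fin n) → (Fin (k + 1) ⊕ Fin n) → ℝ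
  | Sum.inl _, Sum.inl _ => 0
  | Sum.inl _, Sum.inr j => ‖col M j‖
  | Sum.inr j, Sum.inl _ => ‖col M j‖
  | Sum.inr i, Sum.inr j => dist (col M i) (col M j)


open Finset
open Matrix hiding col
open scoped RealInnerProductSpace

lemma sum_pad {m d : ℕ} (hmd : m ≤ d) (c : Fin m → ℝ) :
    ∑ i : Fin d, (if h : (i : ℕ) < m then c ⟨i, h⟩ else 0) = ∑ j : Fin m, c j := by
  set F : ℕ → ℝ := fun i => if h : i < m then c ⟨i, h⟩ else 0 with hF
  have h1 : ∑ i : Fin d, (if h : (i : ℕ) < m then c ⟨i, h⟩ else 0) = ∑ i ∈ range d, F i := by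
    rw [← Fin.sum_univ_eq_sum_range F d]
  have h2 : ∑ i ∈ range d, F i = ∑ i ∈ range m, F i := by
    refine (Finset.sum_subset (Finset.range_subset_range.2 hmd) ?_).symm
    intro i _ hi
    rw [Finset.mem_range, not_lt] at hi
    simp [hF, Nat.not_lt.mpr hi]
  have h3 : ∑ j : Fin m, c j = ∑ i ∈ range m, F i := by
    rw [← Fin.sum_univ_eq_sum_range F m]
    exact Finset.sum_congr rfl fun j _ => by simp [hF]
  rw [h1, h2, h3]

lemma exists_pad {m d : ℕ} (hmd : m ≤ d) :
    ∃ f : EuclideanSpace ℝ (Fin m) → EuclideanSpace ℝ (Fin d),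
      f 0 = 0 ∧ ∀ x y, dist (f x) (f y) = dist x y := by
  refine ⟨fun x => (WithLp.equiv 2 (Fin d → ℝ)).symm
      (fun i => if h : (i : ℕ) < m then x ⟨i, h⟩ else 0), ?_, ?_⟩
  · ext i
    simp [WithLp.equiv_symm_apply, PiLp.toLp_apply]
  · intro x y
    rw [EuclideanSpace.dist_eq, EuclideanSpace.dist_eq]
    congr 1
    have := sum_pad hmd (fun j => dist (x j) (y j) ^ 2)
    rw [← this]
    refine Finset.sum_congr rfl fun i _ => ?_
    simp only [WithLp.equiv_symm_apply, PiLp.toLp_apply]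
    split <;> simp

lemma inner_eq_norms {E : Type*} [NormedAddCommGroup E] [InnerProductSpace ℝ E] (u v : E) :
    ⟪u, v⟫ = (‖u‖ ^ 2 + ‖v‖ ^ 2 - ‖u - v‖ ^ 2) / 2 := by
  rw [norm_sub_sq_real]; ring

/-- one can delete at most `k` columns of `M` to reduce its rank to at
most `r - h` iff the distance space `rhoRank` admits at most `k` outliers whose removal
makes it `(r - h)`-embeddable. -/
theorem stmt13 (r n k h : ℕ) (hh : 1 ≤ h) (hk : 1 ≤ k) (hhr : h ≤ r)
    (M : Matrix (Fin r) (Fin n) ℝ) (hrank : M.rank = r)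
    (hcols : ∀ j : Fin n, col M j ≠ 0) :
    (∃ C : Finset (Fin n), C.card ≤ k ∧
        (M.submatrix id (fun j : {j : Fin n // j ∉ C} => (j : Fin n))).rank ≤ r - h) ↔
      ∃ O : Finset (Fin (k + 1) ⊕ Fin n), O.card ≤ k ∧
        IsEmbeddable (Finset.univ \ O) (rhoRank M k) (r - h) := by
  constructor
  · rintro ⟨C, hCk, hrk⟩
    have key : ∃ O : Finset (Fin (k + 1) ⊕ Fin n), O.card ≤ k ∧
        ∃ φ : (Fin (k+1) ⊕ Fin n) → EuclideanSpace ℝ (Fin (r - h)),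
          ∀ x ∈ Finset.univ \ O, ∀ y ∈ Finset.univ \ O,
            rhoRank M k x y = dist (φ x) (φ y) := by
      classical
      set d := r - h
      set N := M.submatrix id (fun j : {j : Fin n // j ∉ C} => (j : Fin n)) with hN
      set V : Submodule ℝ (EuclideanSpace ℝ (Fin r)) :=
        Submodule.span ℝ (Set.range (fun j : {j : Fin n // j ∉ C} => col M j)) with hV
      have hfin : Module.finrank ℝ V ≤ d := by
        set e : (Fin r → ℝ) ≃ₗ[ℝ] EuclideanSpace ℝ (Fin r) :=
          (WithLp.linearEquiv 2 ℝ (Fin r → ℝ)).symm with he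
        have hmap : (Submodule.span ℝ (Set.range N.col)).map (e : (Fin r → ℝ) →ₗ[ℝ] _) = V := by
          rw [Submodule.map_span, ← Set.range_comp]
          have hfun : (⇑(e : (Fin r → ℝ) →ₗ[ℝ] EuclideanSpace ℝ (Fin r)) ∘ N.col) =
              (fun j : {j : Fin n // j ∉ C} => col M j) := funext fun j => rfl
          rw [hfun]
        have := LinearEquiv.finrank_map_eq e (Submodule.span ℝ (Set.range N.col))
        rw [hmap] at this
        rw [this, ← Matrix.rank_eq_finrank_span_cols]
        exact hrk
      obtain ⟨f, hf0, hfd⟩ := exists_pad hfin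
      have iso := (stdOrthonormalBasis ℝ V).repr
      have hmem : ∀ j : Fin n, j ∉ C → col M j ∈ V := fun j hj =>
        Submodule.subset_span ⟨⟨j, hj⟩, rfl⟩
      refine ⟨C.image Sum.inr, le_trans (Finset.card_image_le) hCk, ?_⟩
      refine ⟨fun x => match x with
        | Sum.inl _ => 0
        | Sum.inr j => if hj : j ∈ C then 0 else f (iso ⟨col M j, hmem j hj⟩), ?_⟩
      have hnotin : ∀ j : Fin n, Sum.inr j ∈ Finset.univ \ (C.image (Sum.inr : Fin n → Fin (k+1) ⊕ Fin n)) → j ∉ C := by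
        intro j hj hjC
        rw [Finset.mem_sdiff] at hj
        exact hj.2 (Finset.mem_image_of_mem _ hjC)
      rintro (a | i) hx (b | j) hy
      · simp [rhoRank]
      · have hj := hnotin j hy
        dsimp only [rhoRank]
        rw [dif_neg hj]
        rw [show (0 : EuclideanSpace ℝ (Fin d)) = f 0 from hf0.symm, hfd, dist_zero_left,
          iso.norm_map]
        rfl
      · have hi := hnotin i hx
        dsimp only [rhoRank]
        rw [dif_neg hi]
        rw [show (0 : EuclideanSpace ℝ (Fin d)) = f 0 from hf0.symm, hfd, dist_comm, dist_zero_left,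
          iso.norm_map]
        rfl
      · have hi := hnotin i hx
        have hj := hnotin j hy
        dsimp only [rhoRank]
        rw [dif_neg hi, dif_neg hj]
        rw [hfd, iso.dist_map, Subtype.dist_eq]
    obtain ⟨O, hOk, φ, hφ⟩ := key
    exact ⟨O, hOk, φ, hφ⟩
  · rintro ⟨O, hO, φ, hφ⟩
    classical
    -- find a surviving p-point
    have ha : ∃ a : Fin (k + 1), Sum.inl a ∉ O := by
      by_contra hall
      push_neg at hall
      have hsub : (Finset.univ.image (Sum.inl : Fin (k + 1) → Fin (k + 1) ⊕ Fin n)) ⊆ O := by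
        intro x hx
        obtain ⟨a, -, rfl⟩ := Finset.mem_image.1 hx
        exact hall a
      have := Finset.card_le_card hsub
      rw [Finset.card_image_of_injective _ Sum.inl_injective, Finset.card_univ,
        Fintype.card_fin] at this
      omega
    obtain ⟨a₀, ha₀⟩ := ha
    set C : Finset (Fin n) := Finset.univ.filter (fun j => Sum.inr j ∈ O) with hC
    have hCcard : C.card ≤ k := by
      have hsub : C.image (Sum.inr : Fin n → Fin (k + 1) ⊕ Fin n) ⊆ O := by
        intro x hx
        obtain ⟨j, hj, rfl⟩ := Finset.mem_image.1 hx
        exact (Finset.mem_filter.1 hj).2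
      have := Finset.card_le_card hsub
      rw [Finset.card_image_of_injective _ Sum.inr_injective] at this
      omega
    have hmem1 : Sum.inl a₀ ∈ Finset.univ \ O := by
      rw [Finset.mem_sdiff]; exact ⟨Finset.mem_univ _, ha₀⟩
    have hmem2 : ∀ j : Fin n, j ∉ C → Sum.inr j ∈ Finset.univ \ O := by
      intro j hj
      rw [Finset.mem_sdiff]
      refine ⟨Finset.mem_univ _, fun hjO => hj ?_⟩
      exact Finset.mem_filter.2 ⟨Finset.mem_univ _, hjO⟩
    set ψ : {j : Fin n // j ∉ C} → EuclideanSpace ℝ (Fin (r - h)) :=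
      fun j => φ (Sum.inr (j : Fin n)) - φ (Sum.inl a₀) with hψ
    have hnorm : ∀ j : {j : Fin n // j ∉ C}, ‖ψ j‖ = ‖col M (j : Fin n)‖ := by
      intro j
      have := hφ (Sum.inr (j : Fin n)) (hmem2 _ j.2) (Sum.inl a₀) hmem1
      dsimp only [rhoRank] at this
      rw [hψ]
      dsimp only
      rw [← dist_eq_norm, ← this]
    have hsub : ∀ i j : {j : Fin n // j ∉ C},
        ‖ψ i - ψ j‖ = ‖col M (i : Fin n) - col M (j : Fin n)‖ := by
      intro i j
      have := hφ (Sum.inr (i : Fin n)) (hmem2 _ i.2) (Sum.inr (j : Fin n)) (hmem2 _ j.2)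
      dsimp only [rhoRank] at this
      rw [hψ]
      dsimp only
      rw [sub_sub_sub_cancel_right, ← dist_eq_norm, ← this, dist_eq_norm]
    have hinner : ∀ i j : {j : Fin n // j ∉ C},
        ⟪ψ i, ψ j⟫ = ⟪col M (i : Fin n), col M (j : Fin n)⟫ := by
      intro i j
      rw [inner_eq_norms, inner_eq_norms, hnorm, hnorm, hsub]
    set N := M.submatrix id (fun j : {j : Fin n // j ∉ C} => (j : Fin n)) with hNdef
    set P : Matrix (Fin (r - h)) {j : Fin n // j ∉ C} ℝ :=
      Matrix.of (fun i j => WithLp.equiv 2 (Fin (r - h) → ℝ) (ψ j) i) with hP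
    have hGram : Nᵀ * N = Pᵀ * P := by
      ext a b
      simp only [Matrix.mul_apply, Matrix.transpose_apply]
      have l1 : ∑ i, N i a * N i b = ⟪col M (a : Fin n), col M (b : Fin n)⟫ := by
        rw [PiLp.inner_apply]
        refine Finset.sum_congr rfl fun i _ => ?_
        simp [hNdef, _root_.col, WithLp.equiv_symm_apply, PiLp.toLp_apply, RCLike.inner_apply, mul_comm]
      have l2 : ∑ i, P i a * P i b = ⟪ψ a, ψ b⟫ := by
        rw [PiLp.inner_apply]
        refine Finset.sum_congr rfl fun i _ => ?_
        simp [hP, RCLike.inner_apply, mul_comm]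
      rw [l1, l2, hinner]
    refine ⟨C, hCcard, ?_⟩
    calc N.rank = (Nᵀ * N).rank := (Matrix.rank_transpose_mul_self N).symm
      _ = (Pᵀ * P).rank := by rw [hGram]
      _ = P.rank := Matrix.rank_transpose_mul_self P
      _ ≤ Fintype.card (Fin (r - h)) := Matrix.rank_le_card_height P
      _ = r - h := Fintype.card_fin _
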